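/- For every m ≥ 1, the representation V₊(m) of the conifold quiver (with y = w = 0, x(e_i) = f_i, z(e_i) = f_{i+1}) is stable with respect to the slope function ζ(V) = ζ₀ dim V₀ + ζ₁ dim V₁ whenever ζ₀ > ζ₁: every proper nonzero subrepresentation W ⊆ V₊(m) satisfies ζ(W)/(dim W₀ + dim W₁) < ζ(V₊(m))/(m−1+m). -/

import Mathlib

/-- The arrow `x` of the representation `V₊(k+1)` of the conifold quiver:
`V₀ = ℂ^k` (basis `e₁,…,e_k`), `V₁ = ℂ^{k+1}` (basis `f₁,…,f_{k+1}`), `x(e_i) = f_i`. -/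
def xMap (k : ℕ) : (Fin k → ℂ) →ₗ[ℂ] (Fin (k + 1) → ℂ) where
  toFun v j := if h : (j : ℕ) < k then v ⟨j, h⟩ else 0
  map_add' u v := by funext j; by_cases h : (j : ℕ) < k <;> simp [h]
  map_smul' c v := by funext j; by_cases h : (j : ℕ) < k <;> simp [h]

/-- The arrow `z` of the representation `V₊(k+1)`: `z(e_i) = f_{i+1}`. -/
def zMap (k : ℕ) : (Fin k → ℂ) →ₗ[ℂ] (Fin (k + 1) → ℂ) where
  toFun v j := if h : 0 < (j : ℕ) then v ⟨(j : ℕ) - 1, by have := j.isLt; omega⟩ else 0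
  map_add' u v := by funext j; by_cases h : 0 < (j : ℕ) <;> simp only [h, ↓reduceDIte, dite_true, dite_false, Pi.add_apply, Pi.smul_apply, add_zero, smul_zero, RingHom.id_apply]
  map_smul' c v := by funext j; by_cases h : 0 < (j : ℕ) <;> simp only [h, ↓reduceDIte, dite_true, dite_false, Pi.add_apply, Pi.smul_apply, add_zero, smul_zero, RingHom.id_apply]

lemma xMap_injective (k : ℕ) : Function.Injective (xMap k) := by
  rw [← LinearMap.ker_eq_bot, LinearMap.ker_eq_bot']
  intro v hv
  funext j
  have := congrFun hv ⟨j, by omega⟩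
  simpa [xMap, j.isLt] using this


lemma key (k : ℕ) (W₀ : Submodule ℂ (Fin k → ℂ)) (hW : W₀ ≠ ⊥) :
    ¬ (W₀.map (zMap k) ≤ W₀.map (xMap k)) := by
  intro hle
  -- set of "top indices" of nonzero elements of W₀
  set S : Set ℕ := {n | ∃ w ∈ W₀, ∃ hn : n < k, w ⟨n, hn⟩ ≠ 0 ∧ ∀ j : Fin k, n < (j : ℕ) → w j = 0}
    with hS
  have hbdd : BddAbove S := ⟨k, fun n hn => by obtain ⟨w, _, hn, _⟩ := hn; omega⟩
  have hSne : S.Nonempty := by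
    obtain ⟨v, hvW, hv0⟩ := Submodule.exists_mem_ne_zero_of_ne_bot hW
    have hsupp : (Finset.univ.filter fun j => v j ≠ 0).Nonempty := by
      rw [Finset.filter_nonempty_iff]
      by_contra hc
      push_neg at hc
      exact hv0 (funext fun j => by simpa using hc j (Finset.mem_univ j))
    set t := (Finset.univ.filter fun j => v j ≠ 0).max' hsupp with ht
    refine ⟨(t : ℕ), v, hvW, t.isLt, ?_, ?_⟩
    · have := (Finset.univ.filter fun j => v j ≠ 0).max'_mem hsupp
      simpa using this
    · intro j hj
      by_contra hj0
      have : j ≤ t := Finset.le_max' _ j (by simp [hj0])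
      omega
  set t := sSup S with htdef
  have htS : t ∈ S := Nat.sSup_mem hSne hbdd
  obtain ⟨w, hwW, htk, hwt, hwtop⟩ := htS
  -- z w ∈ x(W₀)
  have : zMap k w ∈ W₀.map (xMap k) := hle ⟨w, hwW, rfl⟩
  obtain ⟨u, huW, hu⟩ := this
  -- evaluate at index t+1
  have ht1 : (t + 1 : ℕ) < k + 1 := by omega
  have hz1 : zMap k w ⟨t + 1, ht1⟩ = w ⟨t, htk⟩ := by
    simp only [zMap, LinearMap.coe_mk, AddHom.coe_mk]
    rw [dif_pos (Nat.succ_pos t)]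
    rfl
  have hu0 : u ≠ 0 := by
    intro h0
    rw [h0] at hu
    have : zMap k w ⟨t + 1, ht1⟩ = 0 := by rw [← hu]; simp
    exact hwt (by rw [← hz1, this])
  -- u has a top index n, and n ∈ S so n ≤ t
  have hsuppu : (Finset.univ.filter fun j => u j ≠ 0).Nonempty := by
    rw [Finset.filter_nonempty_iff]
    by_contra hc
    push_neg at hc
    exact hu0 (funext fun j => by simpa using hc j (Finset.mem_univ j))
  set s := (Finset.univ.filter fun j => u j ≠ 0).max' hsuppu with hs
  have hsS : (s : ℕ) ∈ S := by
    refine ⟨u, huW, s.isLt, ?_, ?_⟩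
    · have := (Finset.univ.filter fun j => u j ≠ 0).max'_mem hsuppu
      simpa using this
    · intro j hj
      by_contra hj0
      have : j ≤ s := Finset.le_max' _ j (by simp [hj0])
      omega
  have hst : (s : ℕ) ≤ t := le_csSup hbdd hsS
  -- but x u at index t+1 is u ⟨t+1⟩ (or 0), which is 0 since t+1 > s
  have hx1 : xMap k u ⟨t + 1, ht1⟩ = 0 := by
    by_cases hc : (t + 1 : ℕ) < k
    · have : u ⟨t + 1, hc⟩ = 0 := by
        by_contra hj0
        have hle2 : (⟨t + 1, hc⟩ : Fin k) ≤ s := Finset.le_max' _ _ (by simp [hj0])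
        have h2 : t + 1 ≤ (s : ℕ) := by simpa [Fin.le_def] using hle2
        omega
      simp [xMap, hc, this]
    · simp [xMap, hc]
  rw [← hu, hx1] at hz1
  exact hwt hz1.symm

lemma dim_lemma (k : ℕ) (W₀ : Submodule ℂ (Fin k → ℂ)) (W₁ : Submodule ℂ (Fin (k + 1) → ℂ))
    (hx : W₀.map (xMap k) ≤ W₁) (hz : W₀.map (zMap k) ≤ W₁) (hW : W₀ ≠ ⊥) :
    Module.finrank ℂ W₀ + 1 ≤ Module.finrank ℂ W₁ := by
  have h1 : Module.finrank ℂ (W₀.map (xMap k)) = Module.finrank ℂ W₀ :=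
    (LinearEquiv.finrank_eq (Submodule.equivMapOfInjective _ (xMap_injective k) W₀)).symm
  have hlt : W₀.map (xMap k) < W₀.map (xMap k) ⊔ W₀.map (zMap k) :=
    left_lt_sup.mpr (key k W₀ hW)
  have h2 : Module.finrank ℂ (W₀.map (xMap k)) <
      Module.finrank ℂ ↥(W₀.map (xMap k) ⊔ W₀.map (zMap k)) :=
    Submodule.finrank_lt_finrank_of_lt hlt
  have h3 : Module.finrank ℂ ↥(W₀.map (xMap k) ⊔ W₀.map (zMap k)) ≤ Module.finrank ℂ W₁ :=
    Submodule.finrank_mono (sup_le hx hz)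
  omega

/-- Stability of `V₊(m)` for `m = k+1 ≥ 1` when `ζ₀ > ζ₁`: every proper nonzero
subrepresentation `(W₀, W₁)` (subspaces with `x(W₀) ⊆ W₁` and `z(W₀) ⊆ W₁`; the
arrows `y, w` are zero) has strictly smaller normalized slope than
`V₊(m)` itself, whose slope is `(ζ₀(m−1) + ζ₁m)/(m−1+m)`. -/
theorem Vplus_stable (k : ℕ) (ζ₀ ζ₁ : ℝ) (h : ζ₁ < ζ₀)
    (W₀ : Submodule ℂ (Fin k → ℂ)) (W₁ : Submodule ℂ (Fin (k + 1) → ℂ))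
    (hx : W₀.map (xMap k) ≤ W₁) (hz : W₀.map (zMap k) ≤ W₁)
    (hne : ¬(W₀ = ⊥ ∧ W₁ = ⊥)) (hpr : ¬(W₀ = ⊤ ∧ W₁ = ⊤)) :
    (ζ₀ * (Module.finrank ℂ W₀ : ℝ) + ζ₁ * (Module.finrank ℂ W₁ : ℝ)) /
        ((Module.finrank ℂ W₀ : ℝ) + (Module.finrank ℂ W₁ : ℝ))
      < (ζ₀ * k + ζ₁ * (k + 1)) / (k + (k + 1)) := by
  set a := Module.finrank ℂ W₀ with ha
  set b := Module.finrank ℂ W₁ with hb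
  have hV0 : Module.finrank ℂ (Fin k → ℂ) = k := by
    simp [Module.finrank_fintype_fun_eq_card]
  have hV1 : Module.finrank ℂ (Fin (k + 1) → ℂ) = k + 1 := by
    simp [Module.finrank_fintype_fun_eq_card]
  have hak : a ≤ k := hV0 ▸ Submodule.finrank_le W₀
  have hbk : b ≤ k + 1 := hV1 ▸ Submodule.finrank_le W₁
  -- key numeric fact
  have hmain : a * (k + 1) < k * b := by
    by_cases ha0 : a = 0
    · have hW0bot : W₀ = ⊥ := by
        rw [← Submodule.finrank_eq_zero (R := ℂ)]; omega
      have hb0 : b ≠ 0 := by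
        intro hb0
        exact hne ⟨hW0bot, by rw [← Submodule.finrank_eq_zero (R := ℂ)]; omega⟩
      have hk0 : k ≠ 0 := by
        intro hk0
        subst hk0
        refine hpr ⟨?_, ?_⟩
        · exact Subsingleton.elim _ _
        · exact Submodule.eq_top_of_finrank_eq (by omega)
      have : 1 ≤ b := by omega
      have : 1 ≤ k := by omega
      nlinarith
    · have hWne : W₀ ≠ ⊥ := by
        intro hbot
        apply ha0
        subst hbot
        simp [ha]
      have hab : a + 1 ≤ b := dim_lemma k W₀ W₁ hx hz hWne
      have hakk : a < k := by
        rcases lt_or_eq_of_le hak with h' | h'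
        · exact h'
        · exfalso
          refine hpr ⟨Submodule.eq_top_of_finrank_eq (by omega),
            Submodule.eq_top_of_finrank_eq (by omega)⟩
      nlinarith
  have hb1 : 1 ≤ b := by nlinarith
  have hmainR : (a : ℝ) * (k + 1) < (k : ℝ) * b := by exact_mod_cast hmain
  have hd1 : (0 : ℝ) < (a : ℝ) + b := by
    have : (1 : ℝ) ≤ b := by exact_mod_cast hb1
    positivity
  have hd2 : (0 : ℝ) < (k : ℝ) + (k + 1) := by positivity
  rw [div_lt_div_iff₀ hd1 hd2]
  nlinarith [mul_pos (sub_pos.mpr h) (sub_pos.mpr hmainR)]
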